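/- Let 0 < a < b < 1 with 4a + b < 4, and let g be the piecewise linear map through the points (0,0), (a/2, a), (a, a+b), ((4a+b)/4, 1), ((2a+b)/2, a+b), (a+b, a), (1, 0). Let h be the piecewise linear increasing map through (0,0), (a, 2/5), (a+b, 4/5), (1,1). Then h is a homeomorphism of [0,1] and h ∘ g = f ∘ h, where f is the tent map; i.e. g is topologically conjugate to the tent map. -/

import Mathlib

/-- `F` is affine (linear) on the set `s`. -/
def AffOn (F : ℝ → ℝ) (s : Set ℝ) : Prop :=
  ∃ m c : ℝ, ∀ x ∈ s, F x = m * x + c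

/-- The tent map. -/
noncomputable def tent (x : ℝ) : ℝ := 1 - |1 - 2 * x|

lemma aff_eval {F : ℝ → ℝ} {p q u v : ℝ} (hA : AffOn F (Set.Icc p q)) (hpq : p < q)
    (hu : F p = u) (hv : F q = v) :
    ∀ x ∈ Set.Icc p q, F x = u + (v - u) / (q - p) * (x - p) := by
  obtain ⟨m, c, H⟩ := hA
  intro x hx
  have hp : u = m * p + c := by rw [← hu, H p ⟨le_rfl, hpq.le⟩]
  have hq : v = m * q + c := by rw [← hv, H q ⟨hpq.le, le_rfl⟩]
  have hne : q - p ≠ 0 := sub_ne_zero.2 hpq.ne'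
  rw [H x hx, hp, hq]
  field_simp
  ring

lemma aff_mem {F : ℝ → ℝ} {p q u v : ℝ} (hA : AffOn F (Set.Icc p q)) (hpq : p < q)
    (hu : F p = u) (hv : F q = v) (huv : u ≤ v) :
    ∀ x ∈ Set.Icc p q, F x ∈ Set.Icc u v := by
  intro x hx
  rw [aff_eval hA hpq hu hv x hx]
  have hm : 0 ≤ (v - u) / (q - p) := div_nonneg (by linarith) (by linarith)
  constructor
  · nlinarith [hx.1, mul_nonneg hm (by linarith [hx.1] : (0:ℝ) ≤ x - p)]
  · have h1 : (v - u) / (q - p) * (x - p) ≤ (v - u) / (q - p) * (q - p) :=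
      mul_le_mul_of_nonneg_left (by linarith [hx.2]) hm
    have h2 : (v - u) / (q - p) * (q - p) = v - u :=
      div_mul_cancel₀ _ (sub_ne_zero.2 hpq.ne')
    linarith

lemma aff_mem' {F : ℝ → ℝ} {p q u v : ℝ} (hA : AffOn F (Set.Icc p q)) (hpq : p < q)
    (hu : F p = u) (hv : F q = v) (huv : v ≤ u) :
    ∀ x ∈ Set.Icc p q, F x ∈ Set.Icc v u := by
  intro x hx
  rw [aff_eval hA hpq hu hv x hx]
  have hm : (v - u) / (q - p) ≤ 0 := div_nonpos_of_nonpos_of_nonneg (by linarith) (by linarith)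
  constructor
  · have h1 : (v - u) / (q - p) * (q - p) ≤ (v - u) / (q - p) * (x - p) :=
      mul_le_mul_of_nonpos_left (by linarith [hx.2]) hm
    have h2 : (v - u) / (q - p) * (q - p) = v - u :=
      div_mul_cancel₀ _ (sub_ne_zero.2 hpq.ne')
    linarith
  · nlinarith [mul_nonpos_of_nonpos_of_nonneg hm (by linarith [hx.1] : (0:ℝ) ≤ x - p)]

lemma aff_strictMono {F : ℝ → ℝ} {p q u v : ℝ} (hA : AffOn F (Set.Icc p q)) (hpq : p < q)
    (hu : F p = u) (hv : F q = v) (huv : u < v) :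
    StrictMonoOn F (Set.Icc p q) := by
  intro x hx y hy hxy
  rw [aff_eval hA hpq hu hv x hx, aff_eval hA hpq hu hv y hy]
  have hm : 0 < (v - u) / (q - p) := div_pos (by linarith) (by linarith)
  have := mul_lt_mul_of_pos_left (sub_lt_sub_right hxy p) hm
  linarith

lemma strictMonoOn_glue {f : ℝ → ℝ} {p q r : ℝ} (hpq : p ≤ q) (hqr : q ≤ r)
    (h1 : StrictMonoOn f (Set.Icc p q)) (h2 : StrictMonoOn f (Set.Icc q r)) :
    StrictMonoOn f (Set.Icc p r) := by
  intro x hx y hy hxy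
  rcases le_total y q with hyq | hyq
  · exact h1 ⟨hx.1, hxy.le.trans hyq⟩ ⟨hy.1, hyq⟩ hxy
  · rcases le_total x q with hxq | hxq
    · have hfqy : f q ≤ f y := by
        rcases eq_or_lt_of_le hyq with h' | h'
        · rw [h']
        · exact (h2 ⟨le_rfl, hqr⟩ ⟨hyq, hy.2⟩ h').le
      by_cases hxq' : x < q
      · exact lt_of_lt_of_le (h1 ⟨hx.1, hxq⟩ ⟨hpq, le_rfl⟩ hxq') hfqy
      · have hx_eq : x = q := le_antisymm hxq (not_lt.1 hxq')
        rw [hx_eq]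
        exact h2 ⟨le_rfl, hqr⟩ ⟨hyq, hy.2⟩ (hx_eq ▸ hxy)
    · exact h2 ⟨hxq, hx.2⟩ ⟨hyq, hy.2⟩ hxy

set_option maxHeartbeats 1000000 in
/-- For `0 < a < b < 1` with `4a + b < 4`, the piecewise linear map `g` through
`(0,0)`, `(a/2, a)`, `(a, a+b)`, `((4a+b)/4, 1)`, `((2a+b)/2, a+b)`, `(a+b, a)`, `(1,0)`
is conjugate to the tent map via the piecewise linear increasing map `h` through
`(0,0)`, `(a, 2/5)`, `(a+b, 4/5)`, `(1,1)`, which is a homeomorphism of `[0,1]`. -/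
theorem conj_example2 (a b : ℝ) (ha : 0 < a) (hab : a < b) (hb : b < 1)
    (hlt : 4 * a + b < 4) (g h : ℝ → ℝ)
    (hg0 : g 0 = 0) (hg1 : g (a / 2) = a) (hg2 : g a = a + b)
    (hg3 : g ((4 * a + b) / 4) = 1) (hg4 : g ((2 * a + b) / 2) = a + b)
    (hg5 : g (a + b) = a) (hg6 : g 1 = 0)
    (hgA1 : AffOn g (Set.Icc 0 (a / 2)))
    (hgA2 : AffOn g (Set.Icc (a / 2) a))
    (hgA3 : AffOn g (Set.Icc a ((4 * a + b) / 4)))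
    (hgA4 : AffOn g (Set.Icc ((4 * a + b) / 4) ((2 * a + b) / 2)))
    (hgA5 : AffOn g (Set.Icc ((2 * a + b) / 2) (a + b)))
    (hgA6 : AffOn g (Set.Icc (a + b) 1))
    (hh0 : h 0 = 0) (hh1 : h a = 2 / 5) (hh2 : h (a + b) = 4 / 5) (hh3 : h 1 = 1)
    (hhA1 : AffOn h (Set.Icc 0 a))
    (hhA2 : AffOn h (Set.Icc a (a + b)))
    (hhA3 : AffOn h (Set.Icc (a + b) 1)) :
    StrictMonoOn h (Set.Icc (0 : ℝ) 1) ∧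
    h '' Set.Icc (0 : ℝ) 1 = Set.Icc (0 : ℝ) 1 ∧
    ∀ x ∈ Set.Icc (0 : ℝ) 1, h (g x) = tent (h x) := by
  -- First derive `a + b < 1` (otherwise the hypotheses are contradictory).
  have hb0 : 0 < b := lt_trans ha hab
  have hc : a + b < 1 := by
    by_contra hcon
    push_neg at hcon
    obtain ⟨m, c, H⟩ := hhA2
    have e1 := H a ⟨le_rfl, by linarith⟩
    have e2 := H (a + b) ⟨by linarith, le_rfl⟩
    have e3 := H 1 ⟨by linarith, hcon⟩
    rw [hh1] at e1
    rw [hh2] at e2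
    rw [hh3] at e3
    have hmb : 0 < m * b := by linarith
    have hm : 0 < m := by
      rcases mul_pos_iff.1 hmb with ⟨h', _⟩ | ⟨_, h'⟩
      · exact h'
      · linarith
    have := mul_nonneg hm.le (by linarith : (0:ℝ) ≤ a + b - 1)
    nlinarith [e1, e2, e3]
  have hcpos : 0 < 1 - (a + b) := by linarith
  have hcne : (1:ℝ) - (a + b) ≠ 0 := ne_of_gt hcpos
  have hane : a ≠ 0 := ha.ne'
  have hbne : b ≠ 0 := hb0.ne'
  -- interval endpoint inequalities
  have q1 : (0:ℝ) < a / 2 := by linarith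
  have q2 : a / 2 < a := by linarith
  have q3 : a < (4 * a + b) / 4 := by linarith
  have q4 : (4 * a + b) / 4 < (2 * a + b) / 2 := by linarith
  have q5 : (2 * a + b) / 2 < a + b := by linarith
  have q6 : a + b < 1 := hc
  have r2 : a < a + b := by linarith
  -- evaluation lemmas
  have eh1 := aff_eval hhA1 ha hh0 hh1
  have eh2 := aff_eval hhA2 r2 hh1 hh2
  have eh3 := aff_eval hhA3 q6 hh2 hh3
  -- clean formulas for h
  have ehc1 : ∀ x ∈ Set.Icc 0 a, h x = 2 * x / (5 * a) := by
    intro x hx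
    rw [eh1 x hx]
    field_simp
    ring
  have ehc2 : ∀ x ∈ Set.Icc a (a + b), h x = 2 / 5 + 2 * (x - a) / (5 * b) := by
    intro x hx
    rw [eh2 x hx, show a + b - a = b by ring]
    ring
  have ehc3 : ∀ x ∈ Set.Icc (a + b) 1, h x = 4 / 5 + (x - (a + b)) / (5 * (1 - (a + b))) := by
    intro x hx
    rw [eh3 x hx]
    field_simp
    ring
  refine ⟨?_, ?_, ?_⟩
  · -- StrictMonoOn
    have sm1 := aff_strictMono hhA1 ha hh0 hh1 (by norm_num)
    have sm2 := aff_strictMono hhA2 r2 hh1 hh2 (by norm_num)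
    have sm3 := aff_strictMono hhA3 q6 hh2 hh3 (by norm_num)
    exact strictMonoOn_glue (by linarith) (by linarith)
      (strictMonoOn_glue ha.le r2.le sm1 sm2) sm3
  · -- image
    apply Set.Subset.antisymm
    · rintro y ⟨x, hx, rfl⟩
      rcases le_total x a with hxa | hxa
      · have := aff_mem hhA1 ha hh0 hh1 (by norm_num) x ⟨hx.1, hxa⟩
        exact ⟨this.1, by linarith [this.2]⟩
      · rcases le_total x (a + b) with hxab | hxab
        · have := aff_mem hhA2 r2 hh1 hh2 (by norm_num) x ⟨hxa, hxab⟩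
          exact ⟨by linarith [this.1], by linarith [this.2]⟩
        · have := aff_mem hhA3 q6 hh2 hh3 (by norm_num) x ⟨hxab, hx.2⟩
          exact ⟨by linarith [this.1], this.2⟩
    · intro y hy
      rcases le_total y (2/5) with hy1 | hy1
      · have hmem : 5 * a * y / 2 ∈ Set.Icc 0 a := by
          constructor
          · nlinarith [mul_nonneg ha.le hy.1]
          · nlinarith [mul_le_mul_of_nonneg_left hy1 ha.le]
        refine ⟨5 * a * y / 2, ⟨hmem.1, by linarith [hmem.2]⟩, ?_⟩
        rw [ehc1 _ hmem]
        field_simp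
      · rcases le_total y (4/5) with hy2 | hy2
        · have hmem : a + 5 * b * (y - 2/5) / 2 ∈ Set.Icc a (a + b) := by
            constructor
            · nlinarith [mul_nonneg hb0.le (show (0:ℝ) ≤ y - 2/5 by linarith)]
            · nlinarith [mul_le_mul_of_nonneg_left (show y - 2/5 ≤ 2/5 by linarith) hb0.le]
          refine ⟨a + 5 * b * (y - 2/5) / 2, ⟨by linarith [hmem.1], by linarith [hmem.2]⟩, ?_⟩
          rw [ehc2 _ hmem]
          field_simp
          ring
        · have hmem : (a + b) + 5 * (1 - (a + b)) * (y - 4/5) ∈ Set.Icc (a + b) 1 := by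
            constructor
            · nlinarith [mul_nonneg hcpos.le (show (0:ℝ) ≤ y - 4/5 by linarith)]
            · nlinarith [mul_le_mul_of_nonneg_left (show y - 4/5 ≤ 1/5 by linarith [hy.2]) hcpos.le]
          refine ⟨(a + b) + 5 * (1 - (a + b)) * (y - 4/5),
            ⟨by linarith [hmem.1], hmem.2⟩, ?_⟩
          rw [ehc3 _ hmem]
          field_simp
          ring
  · -- conjugacy
    intro x hx
    rcases le_total x ((4 * a + b) / 4) with hA | hA
    · rcases le_total x (a / 2) with hB | hB
      · -- piece 1 : x ∈ [0, a/2]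
        have hxm : x ∈ Set.Icc 0 (a / 2) := ⟨hx.1, hB⟩
        have egc : g x = 2 * x := by
          rw [aff_eval hgA1 q1 hg0 hg1 x hxm,
            show (a - 0)/(a/2 - 0) = 2 by rw [div_eq_iff (by linarith : a/2 - 0 ≠ 0)]; ring]
          ring
        have hgmem : g x ∈ Set.Icc 0 a := by
          rw [egc]; exact ⟨by linarith [hx.1], by linarith⟩
        have hhxm : x ∈ Set.Icc 0 a := ⟨hx.1, by linarith⟩
        have ehg := ehc1 _ hgmem
        have ehx : h x = 2 * x / (5 * a) := ehc1 x hhxm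
        have hle : h x ≤ 1/2 := by
          rw [ehx, div_le_iff₀ (by positivity)]
          nlinarith [hx.1]
        have htent : tent (h x) = 2 * h x := by
          unfold tent
          rw [abs_of_nonneg (by linarith)]
          ring
        rw [htent, ehg, egc, ehx]
        ring
      · rcases le_total x a with hC | hC
        · -- piece 2 : x ∈ [a/2, a]
          have hxm : x ∈ Set.Icc (a / 2) a := ⟨hB, hC⟩
          have egc : g x = a + b * (2 * x - a) / a := by
            rw [aff_eval hgA2 q2 hg1 hg2 x hxm,
              show ((a+b) - a)/(a - a/2) = 2*b/a by
                rw [div_eq_div_iff (by linarith : a - a/2 ≠ 0) (by linarith : a ≠ 0)]; ring]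
            ring
          have hgmem : g x ∈ Set.Icc a (a + b) := by
            rw [egc]
            constructor
            · have : 0 ≤ b * (2 * x - a) / a :=
                div_nonneg (mul_nonneg hb0.le (by linarith)) ha.le
              linarith
            · have : b * (2 * x - a) / a ≤ b := by
                rw [div_le_iff₀ ha]
                nlinarith [mul_le_mul_of_nonneg_left (show 2*x - a ≤ a by linarith) hb0.le]
              linarith
          have hhxm : x ∈ Set.Icc 0 a := ⟨by linarith [hx.1], hC⟩
          have ehg := ehc2 _ hgmem
          have ehx : h x = 2 * x / (5 * a) := ehc1 x hhxm
          have hle : h x ≤ 1/2 := by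
            rw [ehx, div_le_iff₀ (by positivity)]
            nlinarith
          have htent : tent (h x) = 2 * h x := by
            unfold tent
            rw [abs_of_nonneg (by linarith)]
            ring
          rw [htent, ehg, egc, ehx]
          field_simp
          ring
        · -- piece 3 : x ∈ [a, (4a+b)/4]
          have hxm : x ∈ Set.Icc a ((4 * a + b) / 4) := ⟨hC, hA⟩
          have egc : g x = (a + b) + 4 * (1 - (a + b)) * (x - a) / b := by
            rw [aff_eval hgA3 q3 hg2 hg3 x hxm,
              show (1 - (a+b))/((4*a+b)/4 - a) = 4*(1-(a+b))/b by
                rw [div_eq_div_iff (by linarith : (4*a+b)/4 - a ≠ 0) (by linarith : b ≠ 0)]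
                ring]
            ring
          have hgmem : g x ∈ Set.Icc (a + b) 1 := by
            rw [egc]
            constructor
            · have : 0 ≤ 4 * (1 - (a + b)) * (x - a) / b :=
                div_nonneg (mul_nonneg (by linarith) (by linarith)) hb0.le
              linarith
            · have : 4 * (1 - (a + b)) * (x - a) / b ≤ 1 - (a + b) := by
                rw [div_le_iff₀ hb0]
                nlinarith [mul_le_mul_of_nonneg_left (show x - a ≤ b/4 by linarith) hcpos.le]
              linarith
          have hhxm : x ∈ Set.Icc a (a + b) := ⟨hC, by linarith⟩
          have ehg := ehc3 _ hgmem
          have ehx : h x = 2 / 5 + 2 * (x - a) / (5 * b) := ehc2 x hhxm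
          have hle : h x ≤ 1/2 := by
            rw [ehx]
            have : 2 * (x - a) / (5 * b) ≤ 1 / 10 := by
              rw [div_le_iff₀ (by positivity)]
              linarith
            linarith
          have htent : tent (h x) = 2 * h x := by
            unfold tent
            rw [abs_of_nonneg (by linarith)]
            ring
          rw [htent, ehg, egc, ehx]
          field_simp
          ring
    · rcases le_total x ((2 * a + b) / 2) with hB | hB
      · -- piece 4 : x ∈ [(4a+b)/4, (2a+b)/2]
        have hxm : x ∈ Set.Icc ((4 * a + b) / 4) ((2 * a + b) / 2) := ⟨hA, hB⟩
        have egc : g x = 1 - (1 - (a + b)) * (4 * x - 4 * a - b) / b := by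
          rw [aff_eval hgA4 q4 hg3 hg4 x hxm,
            show ((a+b) - 1)/((2*a+b)/2 - (4*a+b)/4) = (4*(a+b)-4)/b by
              rw [div_eq_div_iff (by linarith : (2*a+b)/2 - (4*a+b)/4 ≠ 0)
                (by linarith : b ≠ 0)]
              ring]
          ring
        have hgmem : g x ∈ Set.Icc (a + b) 1 := by
          rw [egc]
          constructor
          · have : (1 - (a + b)) * (4 * x - 4 * a - b) / b ≤ 1 - (a + b) := by
              rw [div_le_iff₀ hb0]
              nlinarith [mul_le_mul_of_nonneg_left (show 4*x - 4*a - b ≤ b by linarith)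
                hcpos.le]
            linarith
          · have : 0 ≤ (1 - (a + b)) * (4 * x - 4 * a - b) / b :=
              div_nonneg (mul_nonneg (by linarith) (by linarith)) hb0.le
            linarith
        have hhxm : x ∈ Set.Icc a (a + b) := ⟨by linarith, by linarith⟩
        have ehg := ehc3 _ hgmem
        have ehx : h x = 2 / 5 + 2 * (x - a) / (5 * b) := ehc2 x hhxm
        have hge : 1/2 ≤ h x := by
          rw [ehx]
          have : 1 / 10 ≤ 2 * (x - a) / (5 * b) := by
            rw [le_div_iff₀ (by positivity)]
            linarith
          linarith
        have htent : tent (h x) = 2 - 2 * h x := by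
          unfold tent
          rw [abs_of_nonpos (by linarith)]
          ring
        rw [htent, ehg, egc, ehx]
        field_simp
        ring
      · rcases le_total x (a + b) with hC | hC
        · -- piece 5 : x ∈ [(2a+b)/2, a+b]
          have hxm : x ∈ Set.Icc ((2 * a + b) / 2) (a + b) := ⟨hB, hC⟩
          have egc : g x = 3 * a + 2 * b - 2 * x := by
            rw [aff_eval hgA5 q5 hg4 hg5 x hxm,
              show (a - (a+b))/((a+b) - (2*a+b)/2) = -2 by
                rw [div_eq_iff (by linarith : (a+b) - (2*a+b)/2 ≠ 0)]; ring]
            ring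
          have hgmem : g x ∈ Set.Icc a (a + b) := by
            rw [egc]; exact ⟨by linarith, by linarith⟩
          have hhxm : x ∈ Set.Icc a (a + b) := ⟨by linarith, hC⟩
          have ehg := ehc2 _ hgmem
          have ehx : h x = 2 / 5 + 2 * (x - a) / (5 * b) := ehc2 x hhxm
          have hge : 1/2 ≤ h x := by
            rw [ehx]
            have : 1 / 10 ≤ 2 * (x - a) / (5 * b) := by
              rw [le_div_iff₀ (by positivity)]
              linarith
            linarith
          have htent : tent (h x) = 2 - 2 * h x := by
            unfold tent
            rw [abs_of_nonpos (by linarith)]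
            ring
          rw [htent, ehg, egc, ehx]
          field_simp
          ring
        · -- piece 6 : x ∈ [a+b, 1]
          have hxm : x ∈ Set.Icc (a + b) 1 := ⟨hC, hx.2⟩
          have egc : g x = a * (1 - x) / (1 - (a + b)) := by
            rw [aff_eval hgA6 q6 hg5 hg6 x hxm]
            field_simp
            ring
          have hgmem : g x ∈ Set.Icc 0 a := by
            rw [egc]
            constructor
            · exact div_nonneg (mul_nonneg ha.le (by linarith [hx.2])) hcpos.le
            · rw [div_le_iff₀ hcpos]
              nlinarith [mul_le_mul_of_nonneg_left (show 1 - x ≤ 1 - (a+b) by linarith)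
                ha.le]
          have ehg := ehc1 _ hgmem
          have ehx : h x = 4 / 5 + (x - (a + b)) / (5 * (1 - (a + b))) := ehc3 x hxm
          have hge : 1/2 ≤ h x := by
            rw [ehx]
            have : 0 ≤ (x - (a + b)) / (5 * (1 - (a + b))) :=
              div_nonneg (by linarith) (by positivity)
            linarith
          have htent : tent (h x) = 2 - 2 * h x := by
            unfold tent
            rw [abs_of_nonpos (by linarith)]
            ring
          rw [htent, ehg, egc, ehx]
          field_simp
          ring
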